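/- arXiv:1502.03009 — 2 statements merged into one kernel-verified Lean document; each statement's English description precedes it below -/
import Mathlib

section
/- Let A ⊆ R^n with 0 ∉ closure(A), and let w ∈ R^n with w ∉ closure(A). Let Φ(x) = x/|x|² and Ψ(x) = (x−w)/|x−w|². Then the map f = Ψ ∘ Φ : Φ(A) → Ψ(A) is bi-Lipschitz. -/
/-- If 0 ∉ closure A and w ∉ closure A, then f = Ψ ∘ Φ : Φ(A) → Ψ(A) is bi-Lipschitz,
    where Φ(x) = x/|x|² and Ψ(x) = (x−w)/|x−w|². -/
theorem inversion_change_of_center_biLipschitz (n : ℕ)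
    (A : Set (EuclideanSpace ℝ (Fin n))) (w : EuclideanSpace ℝ (Fin n))
    (h0 : (0 : EuclideanSpace ℝ (Fin n)) ∉ closure A)
    (hw : w ∉ closure A)
    (Φ Ψ : EuclideanSpace ℝ (Fin n) → EuclideanSpace ℝ (Fin n))
    (hΦ : ∀ x, Φ x = (‖x‖ ^ 2)⁻¹ • x)
    (hΨ : ∀ x, Ψ x = (‖x - w‖ ^ 2)⁻¹ • (x - w)) :
    ∃ c₁ c₂ : ℝ, 0 < c₁ ∧ c₁ ≤ c₂ ∧ ∀ x ∈ Φ '' A, ∀ y ∈ Φ '' A,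
      c₁ * ‖x - y‖ ≤ ‖Ψ (Φ x) - Ψ (Φ y)‖ ∧ ‖Ψ (Φ x) - Ψ (Φ y)‖ ≤ c₂ * ‖x - y‖ := by
  rw [Metric.mem_closure_iff] at h0 hw
  push_neg at h0 hw
  obtain ⟨ε₁, hε₁, hA0⟩ := h0
  obtain ⟨ε₂, hε₂, hAw⟩ := hw
  set δ : ℝ := min ε₁ ε₂ with hδ
  have hδpos : 0 < δ := lt_min hε₁ hε₂
  have hbd0 : ∀ a ∈ A, δ ≤ ‖a‖ := by
    intro a ha
    have := hA0 a ha
    rw [dist_comm, dist_zero_right] at this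
    exact le_trans (min_le_left _ _) this
  have hbdw : ∀ a ∈ A, δ ≤ ‖a - w‖ := by
    intro a ha
    have := hAw a ha
    rw [dist_comm, dist_eq_norm] at this
    exact le_trans (min_le_right _ _) this
  set M : ℝ := 1 + ‖w‖ / δ with hM
  have hM1 : (1 : ℝ) ≤ M := le_add_of_nonneg_right (by positivity)
  have hMpos : 0 < M := lt_of_lt_of_le one_pos hM1
  have key1 : ∀ a ∈ A, ‖a‖ ≤ M * ‖a - w‖ := by
    intro a ha
    have h1 : ‖a‖ ≤ ‖a - w‖ + ‖w‖ := by
      conv_lhs => rw [← sub_add_cancel a w]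
      exact norm_add_le _ _
    have h2 : ‖w‖ ≤ (‖w‖ / δ) * ‖a - w‖ := by
      have := hbdw a ha
      rw [div_mul_eq_mul_div, le_div_iff₀ hδpos]
      nlinarith [norm_nonneg w]
    rw [hM, add_mul, one_mul]
    linarith
  have key2 : ∀ a ∈ A, ‖a - w‖ ≤ M * ‖a‖ := by
    intro a ha
    have h1 : ‖a - w‖ ≤ ‖a‖ + ‖w‖ := norm_sub_le _ _
    have h2 : ‖w‖ ≤ (‖w‖ / δ) * ‖a‖ := by
      have := hbd0 a ha
      rw [div_mul_eq_mul_div, le_div_iff₀ hδpos]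
      nlinarith [norm_nonneg w]
    rw [hM, add_mul, one_mul]
    linarith
  have hΦeq : ∀ x, Φ x = EuclideanGeometry.inversion (0 : EuclideanSpace ℝ (Fin n)) 1 x := by
    intro x
    rw [hΦ, EuclideanGeometry.inversion]
    simp [dist_zero_right, div_pow, vsub_eq_sub, vadd_eq_add]
  have hΨeq : ∀ x, Ψ x = EuclideanGeometry.inversion w 1 x - w := by
    intro x
    rw [hΨ, EuclideanGeometry.inversion]
    simp [dist_eq_norm, div_pow, vsub_eq_sub, vadd_eq_add]
  refine ⟨(M ^ 2)⁻¹, M ^ 2, by positivity, ?_, ?_⟩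
  · have hM2 : 1 ≤ M ^ 2 := by nlinarith
    exact le_trans (inv_le_one_of_one_le₀ hM2) hM2
  rintro x ⟨a, ha, rfl⟩ y ⟨b, hb, rfl⟩
  have ha0 : a ≠ 0 := by
    intro h; have := hbd0 a ha; rw [h, norm_zero] at this; linarith
  have hb0 : b ≠ 0 := by
    intro h; have := hbd0 b hb; rw [h, norm_zero] at this; linarith
  have haw : a ≠ w := by
    intro h; have := hbdw a ha; rw [h, sub_self, norm_zero] at this; linarith
  have hbw : b ≠ w := by
    intro h; have := hbdw b hb; rw [h, sub_self, norm_zero] at this; linarith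
  have hΦΦa : Φ (Φ a) = a := by
    rw [hΦeq, hΦeq]
    exact EuclideanGeometry.inversion_involutive (0 : EuclideanSpace ℝ (Fin n)) one_ne_zero a
  have hΦΦb : Φ (Φ b) = b := by
    rw [hΦeq, hΦeq]
    exact EuclideanGeometry.inversion_involutive (0 : EuclideanSpace ℝ (Fin n)) one_ne_zero b
  rw [hΦΦa, hΦΦb]
  have hΦnorm : ‖Φ a - Φ b‖ = ‖a - b‖ / (‖a‖ * ‖b‖) := by
    have := EuclideanGeometry.dist_inversion_inversion (c := (0 : EuclideanSpace ℝ (Fin n)))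
      (x := a) (y := b) ha0 hb0 1
    simp only [dist_eq_norm, sub_zero, one_pow] at this
    rw [hΦeq, hΦeq, this, div_mul_eq_mul_div, one_mul]
  have hΨnorm : ‖Ψ a - Ψ b‖ = ‖a - b‖ / (‖a - w‖ * ‖b - w‖) := by
    have := EuclideanGeometry.dist_inversion_inversion (c := w)
      (x := a) (y := b) haw hbw 1
    simp only [dist_eq_norm, one_pow] at this
    rw [hΨeq, hΨeq, show EuclideanGeometry.inversion w 1 a - w -
      (EuclideanGeometry.inversion w 1 b - w) =
      EuclideanGeometry.inversion w 1 a - EuclideanGeometry.inversion w 1 b by abel,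
      this, div_mul_eq_mul_div, one_mul]
  rw [hΦnorm, hΨnorm]
  have pa : 0 < ‖a‖ := norm_pos_iff.mpr ha0
  have pb : 0 < ‖b‖ := norm_pos_iff.mpr hb0
  have paw : 0 < ‖a - w‖ := norm_pos_iff.mpr (sub_ne_zero.mpr haw)
  have pbw : 0 < ‖b - w‖ := norm_pos_iff.mpr (sub_ne_zero.mpr hbw)
  have hd : 0 ≤ ‖a - b‖ := norm_nonneg _
  constructor
  · rw [inv_mul_le_iff₀ (by positivity), mul_div_assoc', div_le_div_iff₀ (by positivity) (by positivity)]
    have h1 := key2 a ha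
    have h2 := key2 b hb
    nlinarith [mul_le_mul h1 h2 (le_of_lt pbw) (by positivity : (0:ℝ) ≤ M * ‖a‖),
      mul_nonneg (mul_nonneg (le_of_lt paw) (le_of_lt pbw)) hd]
  · rw [mul_div_assoc', div_le_div_iff₀ (by positivity) (by positivity)]
    have h1 := key1 a ha
    have h2 := key1 b hb
    nlinarith [mul_le_mul h1 h2 (le_of_lt pb) (by positivity : (0:ℝ) ≤ M * ‖a - w‖),
      mul_nonneg (mul_nonneg (le_of_lt pa) (le_of_lt pb)) hd]
end

section
/- Let r₀ ∈ (0,1) and let F: B_{r₀}(0) → S be defined by F(x) = π_S(x/|x|²) for x ≠ 0 and F(0) = N, where S is the sphere of radius 1/2 centered at (0,0,1/2) in R³, π_S is stereographic projection of the plane onto S from the north pole N = (0,0,1). Then F is bi-Lipschitz onto its image. -/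
/-- Stereographic projection from the plane (z = 0) onto the Riemann sphere of radius
    1/2 centered at (0,0,1/2), projecting from the north pole N = (0,0,1):
    (x,y) ↦ (x, y, x²+y²)/(1 + x²+y²). -/
noncomputable def piS (p : EuclideanSpace ℝ (Fin 2)) : EuclideanSpace ℝ (Fin 3) :=
  (WithLp.equiv 2 (Fin 3 → ℝ)).symm
    ![p 0 / (1 + ‖p‖ ^ 2), p 1 / (1 + ‖p‖ ^ 2), ‖p‖ ^ 2 / (1 + ‖p‖ ^ 2)]

/-- The north pole N = (0,0,1) of the Riemann sphere. -/
noncomputable def northPole : EuclideanSpace ℝ (Fin 3) :=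
  (WithLp.equiv 2 (Fin 3 → ℝ)).symm ![0, 0, 1]

lemma nsq2 (x : EuclideanSpace ℝ (Fin 2)) : ‖x‖ ^ 2 = x 0 ^ 2 + x 1 ^ 2 := by
  rw [EuclideanSpace.norm_eq, Real.sq_sqrt (by positivity)]
  simp [Fin.sum_univ_two, sq_abs]

lemma nsq3 (v : EuclideanSpace ℝ (Fin 3)) : ‖v‖ ^ 2 = v 0 ^ 2 + v 1 ^ 2 + v 2 ^ 2 := by
  rw [EuclideanSpace.norm_eq, Real.sq_sqrt (by positivity)]
  simp [Fin.sum_univ_three, sq_abs]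

lemma Fval (F : EuclideanSpace ℝ (Fin 2) → EuclideanSpace ℝ (Fin 3))
    (hF0 : F 0 = northPole)
    (hF : ∀ x : EuclideanSpace ℝ (Fin 2), x ≠ 0 → F x = piS ((‖x‖ ^ 2)⁻¹ • x))
    (x : EuclideanSpace ℝ (Fin 2)) :
    F x = (WithLp.equiv 2 (Fin 3 → ℝ)).symm
      ![x 0 / (1 + ‖x‖ ^ 2), x 1 / (1 + ‖x‖ ^ 2), 1 / (1 + ‖x‖ ^ 2)] := by
  by_cases hx : x = 0
  · subst hx
    rw [hF0, northPole]
    norm_num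
  · rw [hF x hx, piS]
    have hxn : 0 < ‖x‖ := norm_pos_iff.mpr hx
    have hns : ‖(‖x‖ ^ 2)⁻¹ • x‖ ^ 2 = (‖x‖ ^ 2)⁻¹ := by
      rw [norm_smul]
      rw [Real.norm_eq_abs, abs_of_nonneg (by positivity)]
      field_simp
    have hc : ∀ i, ((‖x‖ ^ 2)⁻¹ • x) i = (‖x‖ ^ 2)⁻¹ * x i := fun i => rfl
    rw [hns, hc, hc]
    have h1 : (0:ℝ) < ‖x‖ ^ 2 := by positivity
    have h2 : (0:ℝ) < 1 + ‖x‖ ^ 2 := by positivity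
    have hgen : ∀ t : ℝ, (‖x‖ ^ 2)⁻¹ * t / (1 + (‖x‖ ^ 2)⁻¹) = t / (1 + ‖x‖ ^ 2) := by
      intro t; rw [div_eq_div_iff (by positivity) (by positivity)]; field_simp
      ring
    have hlast : (‖x‖ ^ 2)⁻¹ / (1 + (‖x‖ ^ 2)⁻¹) = 1 / (1 + ‖x‖ ^ 2) := by
      rw [div_eq_div_iff (by positivity) (by positivity)]; field_simp; ring
    congr 1
    ext i
    fin_cases i <;> simp [hgen, hlast]

/-- For r₀ ∈ (0,1), the map F : B_{r₀}(0) → S given by F(x) = π_S(x/|x|²) for x ≠ 0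
    and F(0) = N (composition of geometric inversion and stereographic projection)
    is bi-Lipschitz onto its image. -/
theorem inversion_stereographic_biLipschitz (r₀ : ℝ) (hr₀ : r₀ ∈ Set.Ioo (0 : ℝ) 1)
    (F : EuclideanSpace ℝ (Fin 2) → EuclideanSpace ℝ (Fin 3))
    (hF0 : F 0 = northPole)
    (hF : ∀ x : EuclideanSpace ℝ (Fin 2), x ≠ 0 → F x = piS ((‖x‖ ^ 2)⁻¹ • x)) :
    ∃ c₁ c₂ : ℝ, 0 < c₁ ∧ c₁ ≤ c₂ ∧
      ∀ a ∈ Metric.ball (0 : EuclideanSpace ℝ (Fin 2)) r₀,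
      ∀ b ∈ Metric.ball (0 : EuclideanSpace ℝ (Fin 2)) r₀,
        c₁ * ‖a - b‖ ≤ ‖F a - F b‖ ∧ ‖F a - F b‖ ≤ c₂ * ‖a - b‖ := by
  have key : ∀ a b : EuclideanSpace ℝ (Fin 2),
      ‖F a - F b‖ ^ 2 * ((1 + ‖a‖ ^ 2) * (1 + ‖b‖ ^ 2)) = ‖a - b‖ ^ 2 := by
    intro a b
    have ha : (0:ℝ) < 1 + ‖a‖ ^ 2 := by positivity
    have hb : (0:ℝ) < 1 + ‖b‖ ^ 2 := by positivity
    have hsub : ∀ (u v : EuclideanSpace ℝ (Fin 3)) (i : Fin 3), (u - v) i = u i - v i :=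
      fun _ _ _ => rfl
    have hsab : ∀ (u v : EuclideanSpace ℝ (Fin 2)) (i : Fin 2), (u - v) i = u i - v i :=
      fun _ _ _ => rfl
    have ha' : (1:ℝ) + (a 0 ^ 2 + a 1 ^ 2) ≠ 0 := by positivity
    have hb' : (1:ℝ) + (b 0 ^ 2 + b 1 ^ 2) ≠ 0 := by positivity
    rw [Fval F hF0 hF a, Fval F hF0 hF b]
    simp only [nsq3, nsq2, hsub, hsab, WithLp.equiv_symm_apply, PiLp.toLp_apply, Matrix.cons_val_zero,
      Matrix.cons_val_one, Matrix.head_cons, Matrix.cons_val_two, Matrix.tail_cons]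
    field_simp
    ring
  refine ⟨1/2, 1, by norm_num, by norm_num, fun a ha b hb => ?_⟩
  simp only [Metric.mem_ball, dist_zero_right] at ha hb
  have ha1 : ‖a‖ ^ 2 ≤ 1 := by nlinarith [norm_nonneg a, hr₀.2]
  have hb1 : ‖b‖ ^ 2 ≤ 1 := by nlinarith [norm_nonneg b, hr₀.2]
  have hk := key a b
  have hP1 : (1:ℝ) ≤ (1 + ‖a‖ ^ 2) * (1 + ‖b‖ ^ 2) := by nlinarith [sq_nonneg ‖a‖, sq_nonneg ‖b‖]
  have hP4 : (1 + ‖a‖ ^ 2) * (1 + ‖b‖ ^ 2) ≤ 4 := by nlinarith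
  have hFn : (0:ℝ) ≤ ‖F a - F b‖ := norm_nonneg _
  constructor
  · have : (1/2 * ‖a - b‖) ^ 2 ≤ ‖F a - F b‖ ^ 2 := by nlinarith [sq_nonneg ‖F a - F b‖]
    exact le_of_pow_le_pow_left₀ two_ne_zero hFn (by nlinarith [norm_nonneg (a-b)])
  · have : ‖F a - F b‖ ^ 2 ≤ (1 * ‖a - b‖) ^ 2 := by nlinarith [sq_nonneg ‖F a - F b‖]
    exact le_of_pow_le_pow_left₀ two_ne_zero (by positivity) this
end
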